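/- Let p ≥ 1 and Y ⊆ ℝ^p satisfy Assumption A (Y is nonempty, bounded below, and Y↑ is closed). Then for every y ∈ Y, Λ(y) = {λ ∈ Λ : λ·y ≤ λ·y' for all y' ∈ Y_ESN}, and Λ(y) is a convex and compact subset of ℝ^p. -/

import Mathlib

open Set Pointwise Finset

/-- The set of points of `A` that are nondominated in `A` (componentwise order). -/
def nonDomPts (p : ℕ) (A : Set (Fin p → ℝ)) : Set (Fin p → ℝ) :=
  {y | y ∈ A ∧ ∀ y' ∈ A, y' ≤ y → y' = y}

/-- The upper image `Y↑ = conv Y + ℝ≥0^p`. -/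
def upImage (p : ℕ) (Y : Set (Fin p → ℝ)) : Set (Fin p → ℝ) :=
  convexHull ℝ Y + {r : Fin p → ℝ | 0 ≤ r}

/-- Extreme-supported nondominated points of `Y`. -/
def ESN (p : ℕ) (Y : Set (Fin p → ℝ)) : Set (Fin p → ℝ) :=
  {y | y ∈ nonDomPts p Y ∧ y ∈ Set.extremePoints ℝ (convexHull ℝ Y)}

/-- The weight set component `Λ(y)` of a point `y`. -/
def wsc (p : ℕ) (Y : Set (Fin p → ℝ)) (y : Fin p → ℝ) : Set (Fin p → ℝ) :=
  {l ∈ stdSimplex ℝ (Fin p) | ∀ y' ∈ Y, ∑ i, l i * y i ≤ ∑ i, l i * y' i}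

section Aux

variable {p : ℕ} {Y : Set (Fin p → ℝ)}

lemma hull_subset_upImage : convexHull ℝ Y ⊆ upImage p Y := fun x hx =>
  ⟨x, hx, 0, Set.mem_setOf.2 (le_refl 0), add_zero x⟩

lemma subset_upImage : Y ⊆ upImage p Y :=
  (subset_convexHull ℝ Y).trans hull_subset_upImage

lemma add_mem_upImage {z r : Fin p → ℝ} (hz : z ∈ upImage p Y) (hr : 0 ≤ r) :
    z + r ∈ upImage p Y := by
  obtain ⟨u, hu, s, hs, rfl⟩ := hz
  exact ⟨u, hu, s + r, add_nonneg hs hr, (add_assoc u s r).symm⟩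

lemma upImage_convex : Convex ℝ (upImage p Y) := by
  have h1 : Convex ℝ {r : Fin p → ℝ | 0 ≤ r} := by
    have : {r : Fin p → ℝ | 0 ≤ r} = Set.Ici 0 := rfl
    rw [this]; exact convex_Ici 0
  exact (convex_convexHull ℝ Y).add h1

lemma upImage_le {b : Fin p → ℝ} (hb : ∀ y ∈ Y, b ≤ y) {z : Fin p → ℝ}
    (hz : z ∈ upImage p Y) : b ≤ z := by
  obtain ⟨u, hu, s, hs, rfl⟩ := hz
  have hu' : u ∈ Set.Ici b := convexHull_min hb (convex_Ici b) hu
  exact le_add_of_le_of_nonneg hu' hs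

lemma extreme_eat {e u r : Fin p → ℝ} (he : e ∈ Set.extremePoints ℝ (upImage p Y))
    (hu : u ∈ upImage p Y) (hr : 0 ≤ r) (heq : u + r = e) : u = e := by
  have h2 : u + r + r ∈ upImage p Y := add_mem_upImage (heq ▸ he.1) hr
  have hseg : e ∈ openSegment ℝ u (u + r + r) := by
    refine ⟨1/2, 1/2, by norm_num, by norm_num, by norm_num, ?_⟩
    funext i
    have := congrFun heq i
    simp only [Pi.add_apply, Pi.smul_apply, smul_eq_mul] at this ⊢
    linarith
  exact he.2 hu h2 hseg

lemma extreme_upImage_mem_ESN {e : Fin p → ℝ}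
    (he : e ∈ Set.extremePoints ℝ (upImage p Y)) : e ∈ ESN p Y := by
  have heHull : e ∈ convexHull ℝ Y := by
    obtain ⟨u, hu, s, hs, heq⟩ := he.1
    have := extreme_eat he (hull_subset_upImage hu) hs heq
    rwa [this] at hu
  have heExt : e ∈ Set.extremePoints ℝ (convexHull ℝ Y) :=
    ⟨heHull, fun x1 hx1 x2 hx2 hs =>
      he.2 (hull_subset_upImage hx1) (hull_subset_upImage hx2) hs⟩
  have heY : e ∈ Y := extremePoints_convexHull_subset heExt
  refine ⟨⟨heY, fun y'' hy'' hle => ?_⟩, heExt⟩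
  exact extreme_eat he (subset_upImage hy'') (sub_nonneg.2 hle) (by abel)


lemma exists_esn (p : ℕ) (hp : 1 ≤ p) (Y : Set (Fin p → ℝ))
    (b : Fin p → ℝ) (hb : ∀ y ∈ Y, b ≤ y) (hclosed : IsClosed (upImage p Y))
    (y' : Fin p → ℝ) (hy' : y' ∈ Y) (μ : Fin p → ℝ) (hμ : ∀ i, 0 < μ i) :
    ∃ e ∈ ESN p Y, ∑ i, μ i * e i ≤ ∑ i, μ i * y' i := by
  haveI : NeZero p := ⟨by omega⟩
  -- the continuous linear functional z ↦ ∑ μ i * z i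
  set f : (Fin p → ℝ) →L[ℝ] ℝ :=
    ∑ i, μ i • (ContinuousLinearMap.proj i : (Fin p → ℝ) →L[ℝ] ℝ) with hf
  have hfapp : ∀ z : Fin p → ℝ, f z = ∑ i, μ i * z i := by
    intro z
    simp [hf, ContinuousLinearMap.sum_apply, ContinuousLinearMap.smul_apply,
      ContinuousLinearMap.proj_apply, smul_eq_mul]
  -- minimum component of μ
  obtain ⟨i0, -, hi0⟩ := Finset.exists_min_image Finset.univ μ ⟨0, Finset.mem_univ 0⟩
  have hi0' : ∀ i, μ i0 ≤ μ i := fun i => hi0 i (Finset.mem_univ i)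
  have hμ0 : 0 < μ i0 := hμ i0
  have hby' : b ≤ y' := hb y' hy'
  set B : ℝ := ∑ i, μ i * (y' i - b i) with hB
  have hBnn : 0 ≤ B := Finset.sum_nonneg fun i _ =>
    mul_nonneg (hμ i).le (sub_nonneg.2 (hby' i))
  set c : Fin p → ℝ := fun i => max (y' i) (b i + B / μ i0) + 1 with hc
  set K : Set (Fin p → ℝ) := upImage p Y ∩ Set.Iic c with hK
  have hKclosed : IsClosed K := hclosed.inter isClosed_Iic
  have hKsub : K ⊆ Set.Icc b c := fun z hz => ⟨upImage_le hb hz.1, hz.2⟩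
  have hKcomp : IsCompact K := isCompact_Icc.of_isClosed_subset hKclosed hKsub
  have hy'K : y' ∈ K := by
    refine ⟨subset_upImage hy', fun i => ?_⟩
    have := le_max_left (y' i) (b i + B / μ i0)
    simp only [hc]; linarith
  have hKconv : Convex ℝ K := upImage_convex.inter (convex_Iic c)
  -- find the minimizer of f over K that is an extreme point of K
  obtain ⟨z0, hz0K, hz0min⟩ := hKcomp.exists_isMinOn ⟨y', hy'K⟩ f.continuous.continuousOn
  set F : Set (Fin p → ℝ) := {x ∈ K | ∀ w ∈ K, (-f) w ≤ (-f) x} with hF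
  have hexp : IsExposed ℝ K F := fun _ => ⟨-f, rfl⟩
  have hz0F : z0 ∈ F := ⟨hz0K, fun w hw => by
    simpa using neg_le_neg (isMinOn_iff.1 hz0min w hw)⟩
  obtain ⟨e, heF⟩ := (hexp.isCompact hKcomp).extremePoints_nonempty ⟨z0, hz0F⟩
  have heK : e ∈ Set.extremePoints ℝ K :=
    hexp.isExtreme.extremePoints_subset_extremePoints heF
  have heKmem : e ∈ K := heK.1
  have heU : e ∈ upImage p Y := heKmem.1
  have hbe : b ≤ e := upImage_le hb heU
  have hfey' : f e ≤ f y' := by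
    have := heF.1.2 y' hy'K
    simpa using this
  -- coordinate bound on e
  have hebound : ∀ i, e i ≤ b i + B / μ i0 := by
    intro i
    have h1 : μ i * (e i - b i) ≤ ∑ j, μ j * (e j - b j) :=
      Finset.single_le_sum (f := fun j => μ j * (e j - b j))
        (fun j _ => mul_nonneg (hμ j).le (sub_nonneg.2 (hbe j))) (Finset.mem_univ i)
    have h2 : ∑ j, μ j * (e j - b j) ≤ B := by
      rw [hB]
      have h3 : ∑ j, μ j * (e j - b j) = f e - ∑ j, μ j * b j := by
        rw [hfapp]; rw [← Finset.sum_sub_distrib]; congr 1; funext j; ring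
      have h4 : ∑ j, μ j * (y' j - b j) = f y' - ∑ j, μ j * b j := by
        rw [hfapp]; rw [← Finset.sum_sub_distrib]; congr 1; funext j; ring
      rw [h3, h4]; linarith
    have h5 : μ i * (e i - b i) ≤ B := le_trans h1 h2
    have h6 : e i - b i ≤ B / μ i := (le_div_iff₀ (hμ i)).2 (by linarith [h5, mul_comm (μ i) (e i - b i)])
    have h7 : B / μ i ≤ B / μ i0 :=
      div_le_div_of_nonneg_left hBnn hμ0 (hi0' i)
    linarith
  have helt : ∀ i, e i < c i := fun i => by
    have := le_max_right (y' i) (b i + B / μ i0)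
    have := hebound i
    simp only [hc]; linarith
  -- e is an extreme point of the upper image
  have heExtU : e ∈ Set.extremePoints ℝ (upImage p Y) := by
    refine ⟨heU, fun x1 hx1 x2 hx2 hseg => ?_⟩
    obtain ⟨a1, a2, ha1, ha2, hsum, heq⟩ := hseg
    -- shrink the segment to stay below c
    obtain ⟨j0, -, hj0⟩ := Finset.exists_min_image Finset.univ (fun i => c i - e i)
      ⟨0, Finset.mem_univ 0⟩
    set δ : ℝ := c j0 - e j0 with hδ
    have hδpos : 0 < δ := sub_pos.2 (helt j0)
    have hδle : ∀ i, δ ≤ c i - e i := fun i => hj0 i (Finset.mem_univ i)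
    set R : ℝ := 1 + ∑ i, (|x1 i - e i| + |x2 i - e i|) with hR
    have hRpos : 0 < R := by
      have : (0:ℝ) ≤ ∑ i, (|x1 i - e i| + |x2 i - e i|) :=
        Finset.sum_nonneg fun i _ => add_nonneg (abs_nonneg _) (abs_nonneg _)
      simp only [hR]; linarith
    set t : ℝ := δ / (R + δ) with ht
    have htpos : 0 < t := div_pos hδpos (by linarith)
    have htlt1 : t < 1 := by
      rw [ht, div_lt_one (by linarith)]; linarith
    have habs : ∀ i, |x1 i - e i| ≤ R ∧ |x2 i - e i| ≤ R := by
      intro i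
      have h1 : |x1 i - e i| + |x2 i - e i| ≤ ∑ j, (|x1 j - e j| + |x2 j - e j|) :=
        Finset.single_le_sum (f := fun j => |x1 j - e j| + |x2 j - e j|)
          (fun j _ => add_nonneg (abs_nonneg _) (abs_nonneg _)) (Finset.mem_univ i)
      constructor
      · simp only [hR]; linarith [abs_nonneg (x2 i - e i)]
      · simp only [hR]; linarith [abs_nonneg (x1 i - e i)]
    have htR : t * R < δ := by
      rw [ht, div_mul_eq_mul_div, div_lt_iff₀ (by linarith)]
      nlinarith
    have hkey : ∀ (x : Fin p → ℝ), (∀ i, |x i - e i| ≤ R) →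
        e + t • (x - e) ∈ upImage p Y → e + t • (x - e) ∈ K := by
      intro x hxb hmem
      refine ⟨hmem, fun i => ?_⟩
      have h1 : t * (x i - e i) ≤ t * |x i - e i| :=
        mul_le_mul_of_nonneg_left (le_abs_self _) htpos.le
      have h2 : t * |x i - e i| ≤ t * R := mul_le_mul_of_nonneg_left (hxb i) htpos.le
      have h3 := hδle i
      simp only [Pi.add_apply, Pi.smul_apply, Pi.sub_apply, smul_eq_mul]
      linarith
    have hmem1 : e + t • (x1 - e) ∈ upImage p Y := by
      have : e + t • (x1 - e) = (1 - t) • e + t • x1 := by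
        funext i; simp only [Pi.add_apply, Pi.smul_apply, Pi.sub_apply, smul_eq_mul]; ring
      rw [this]
      exact upImage_convex heU hx1 (by linarith) htpos.le (by ring)
    have hmem2 : e + t • (x2 - e) ∈ upImage p Y := by
      have : e + t • (x2 - e) = (1 - t) • e + t • x2 := by
        funext i; simp only [Pi.add_apply, Pi.smul_apply, Pi.sub_apply, smul_eq_mul]; ring
      rw [this]
      exact upImage_convex heU hx2 (by linarith) htpos.le (by ring)
    have hK1 : e + t • (x1 - e) ∈ K := hkey x1 (fun i => (habs i).1) hmem1
    have hK2 : e + t • (x2 - e) ∈ K := hkey x2 (fun i => (habs i).2) hmem2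
    have hseg' : e ∈ openSegment ℝ (e + t • (x1 - e)) (e + t • (x2 - e)) := by
      refine ⟨a1, a2, ha1, ha2, hsum, ?_⟩
      funext i
      have h1 := congrFun heq i
      simp only [Pi.add_apply, Pi.smul_apply, Pi.sub_apply, smul_eq_mul] at h1 ⊢
      linear_combination t * h1 + (e i - t * e i) * hsum
    have hx1e := heK.2 hK1 hK2 hseg'
    have h1 : t • (x1 - e) = 0 := by
      have := hx1e
      rwa [add_eq_left] at this
    have h2 : x1 - e = 0 := (smul_eq_zero.1 h1).resolve_left (ne_of_gt htpos)
    exact sub_eq_zero.1 h2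
  refine ⟨e, extreme_upImage_mem_ESN heExtU, ?_⟩
  rw [← hfapp, ← hfapp]; exact hfey'


end Aux

theorem stmt_7 (p : ℕ) (hp : 1 ≤ p) (Y : Set (Fin p → ℝ))
    (hne : Y.Nonempty) (b : Fin p → ℝ) (hb : ∀ y ∈ Y, b ≤ y)
    (hclosed : IsClosed (upImage p Y))
    (y : Fin p → ℝ) (hy : y ∈ Y) :
    wsc p Y y =
      {l ∈ stdSimplex ℝ (Fin p) | ∀ y' ∈ ESN p Y, ∑ i, l i * y i ≤ ∑ i, l i * y' i} ∧
    Convex ℝ (wsc p Y y) ∧ IsCompact (wsc p Y y) := by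
  refine ⟨?_, ?_, ?_⟩
  · ext l
    constructor
    · rintro ⟨hl, h2⟩
      exact ⟨hl, fun y' hy' => h2 y' hy'.1.1⟩
    · rintro ⟨hl, h2⟩
      refine ⟨hl, fun y' hy' => ?_⟩
      have hby' : b ≤ y' := hb y' hy'
      refine le_of_forall_pos_le_add fun δ hδ => ?_
      set C : ℝ := ∑ i, (y' i - b i) with hC
      have hCnn : 0 ≤ C := Finset.sum_nonneg fun i _ => sub_nonneg.2 (hby' i)
      set ε : ℝ := δ / (C + 1) with hε
      have hεpos : 0 < ε := div_pos hδ (by linarith)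
      set μ : Fin p → ℝ := fun i => l i + ε with hμdef
      have hμ : ∀ i, 0 < μ i := fun i => add_pos_of_nonneg_of_pos (hl.1 i) hεpos
      obtain ⟨e, heESN, hee⟩ := exists_esn p hp Y b hb hclosed y' hy' μ hμ
      have hye : ∑ i, l i * y i ≤ ∑ i, l i * e i := h2 e heESN
      have hbe : b ≤ e := hb e heESN.1.1
      -- expand hee
      have hexp : ∑ i, l i * e i + ε * ∑ i, e i ≤ ∑ i, l i * y' i + ε * ∑ i, y' i := by
        have h3 : ∀ z : Fin p → ℝ, ∑ i, μ i * z i = ∑ i, l i * z i + ε * ∑ i, z i := by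
          intro z
          rw [Finset.mul_sum, ← Finset.sum_add_distrib]
          congr 1; funext i; simp only [hμdef]; ring
        rw [h3, h3] at hee; exact hee
      have hsum_be : ∑ i, b i ≤ ∑ i, e i := Finset.sum_le_sum fun i _ => hbe i
      have hCe : ∑ i, y' i - ∑ i, e i ≤ C := by
        have : C = ∑ i, y' i - ∑ i, b i := by
          rw [hC, Finset.sum_sub_distrib]
        linarith
      have hεC : ε * C ≤ δ := by
        rw [hε, div_mul_eq_mul_div, div_le_iff₀ (by linarith : (0:ℝ) < C + 1)]
        nlinarith
      nlinarith [mul_le_mul_of_nonneg_left hCe hεpos.le]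
  · intro l1 hl1 l2 hl2 a a' ha ha' haa
    refine ⟨convex_stdSimplex ℝ (Fin p) hl1.1 hl2.1 ha ha' haa, fun y' hy' => ?_⟩
    have h1 := hl1.2 y' hy'
    have h2 := hl2.2 y' hy'
    have hexp : ∀ z : Fin p → ℝ, ∑ i, (a • l1 + a' • l2) i * z i
        = a * ∑ i, l1 i * z i + a' * ∑ i, l2 i * z i := by
      intro z
      rw [Finset.mul_sum, Finset.mul_sum, ← Finset.sum_add_distrib]
      congr 1; funext i
      simp only [Pi.add_apply, Pi.smul_apply, smul_eq_mul]; ring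
    rw [hexp, hexp]
    exact add_le_add (mul_le_mul_of_nonneg_left h1 ha) (mul_le_mul_of_nonneg_left h2 ha')
  · have hwcl : IsClosed (wsc p Y y) := by
      have heq : wsc p Y y = stdSimplex ℝ (Fin p) ∩ ⋂ y' ∈ Y,
          {l : Fin p → ℝ | ∑ i, l i * y i ≤ ∑ i, l i * y' i} := by
        ext l
        simp only [wsc, Set.mem_setOf_eq, Set.mem_inter_iff, Set.mem_iInter]
      rw [heq]
      refine (isClosed_stdSimplex _ _).inter (isClosed_biInter fun y' _ => ?_)
      exact isClosed_le
        (continuous_finset_sum _ fun i _ => (continuous_apply i).mul continuous_const)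
        (continuous_finset_sum _ fun i _ => (continuous_apply i).mul continuous_const)
    exact (isCompact_stdSimplex _ _).of_isClosed_subset hwcl fun l hl => hl.1
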